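/- Let λ₁ ≥ 1 and θ ∈ ℝ. The supremum over ε ∈ (0,1] of the maximum of G₁(ε) = εθ − 2ε log ε − 2(1-ε)log(1-ε) on (0, 1/(1+λ₁)] and G₂(ε) = εθ − ε log ε − (1-ε)log(λ₁(1-ε)) + log(1+λ₁) on (1/(1+λ₁), 1] equals 2 log(1 + e^{θ/2}) if θ ≤ −2 log λ₁, and equals log(1 + λ₁ e^θ) + log(1 + 1/λ₁) if θ > −2 log λ₁. -/

import Mathlib

open Real

lemma gibbs_le (a x : ℝ) (h0 : 0 < x) (h1 : x < 1) :
    a * x - x * log x - (1 - x) * log (1 - x) ≤ log (1 + exp a) := by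
  have hx1 : 0 < 1 - x := by linarith
  have he : 0 < exp a := exp_pos a
  have hs : 0 < 1 + exp a := by linarith
  have k1 : log (exp a / (x * (1 + exp a))) ≤ exp a / (x * (1 + exp a)) - 1 :=
    log_le_sub_one_of_pos (by positivity)
  have k2 : log (1 / ((1 - x) * (1 + exp a))) ≤ 1 / ((1 - x) * (1 + exp a)) - 1 :=
    log_le_sub_one_of_pos (by positivity)
  have e1 : log (exp a / (x * (1 + exp a))) = a - log x - log (1 + exp a) := by
    rw [log_div he.ne' (by positivity), log_exp, log_mul h0.ne' hs.ne']; ring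
  have e2 : log (1 / ((1 - x) * (1 + exp a))) = - log (1 - x) - log (1 + exp a) := by
    rw [log_div one_ne_zero (by positivity), log_one, log_mul hx1.ne' hs.ne']; ring
  rw [e1] at k1; rw [e2] at k2
  have m1 := mul_le_mul_of_nonneg_left k1 h0.le
  have m2 := mul_le_mul_of_nonneg_left k2 hx1.le
  have r1 : x * (exp a / (x * (1 + exp a)) - 1) = exp a / (1 + exp a) - x := by
    field_simp
  have r2 : (1 - x) * (1 / ((1 - x) * (1 + exp a)) - 1) = 1 / (1 + exp a) - (1 - x) := by
    field_simp
  rw [r1] at m1; rw [r2] at m2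
  have hsum : exp a / (1 + exp a) + 1 / (1 + exp a) = 1 := by field_simp; ring
  nlinarith [m1, m2, hsum]

lemma gibbs_eq (a : ℝ) :
    a * (exp a / (1 + exp a)) - (exp a / (1 + exp a)) * log (exp a / (1 + exp a))
      - (1 - exp a / (1 + exp a)) * log (1 - exp a / (1 + exp a)) = log (1 + exp a) := by
  have he : 0 < exp a := exp_pos a
  have hs : 0 < 1 + exp a := by linarith
  have h1 : (1 : ℝ) - exp a / (1 + exp a) = 1 / (1 + exp a) := by field_simp; ring
  have l1 : log (exp a / (1 + exp a)) = a - log (1 + exp a) := by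
    rw [log_div he.ne' hs.ne', log_exp]
  have l2 : log ((1:ℝ) / (1 + exp a)) = - log (1 + exp a) := by
    rw [one_div, log_inv]
  rw [h1, l1, l2]
  have hsum : exp a / (1 + exp a) + 1 / (1 + exp a) = 1 := by field_simp; ring
  linear_combination log (1 + exp a) * hsum

set_option maxHeartbeats 1000000 in
open Real in
/-- Note `Real.log 0 = 0` in Mathlib, encoding the convention `0 · log 0 = 0`. -/
theorem stmt_13 (lam1 θ : ℝ) (hlam : 1 ≤ lam1)
    (G1 G2 : ℝ → ℝ)
    (hG1 : ∀ ε : ℝ, G1 ε = ε * θ - 2 * ε * log ε - 2 * (1 - ε) * log (1 - ε))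
    (hG2 : ∀ ε : ℝ, G2 ε = ε * θ - ε * log ε - (1 - ε) * log (lam1 * (1 - ε)) + log (1 + lam1)) :
    sSup (G1 '' Set.Ioc 0 (1 / (1 + lam1)) ∪ G2 '' Set.Ioc (1 / (1 + lam1)) 1) =
      if θ ≤ -2 * log lam1 then 2 * log (1 + exp (θ / 2))
      else log (1 + lam1 * exp θ) + log (1 + 1 / lam1) := by
  have hlam0 : (0:ℝ) < lam1 := by linarith
  have hs1 : (0:ℝ) < 1 + lam1 := by linarith
  set ε₀ : ℝ := 1 / (1 + lam1) with hε₀def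
  have hε₀pos : 0 < ε₀ := by positivity
  have hε₀lt1 : ε₀ < 1 := by rw [hε₀def, div_lt_one hs1]; linarith
  have hlogε₀ : log ε₀ = - log (1 + lam1) := by rw [hε₀def, one_div, log_inv]
  have h1ε₀ : 1 - ε₀ = lam1 / (1 + lam1) := by rw [hε₀def]; field_simp; ring
  have hlog1ε₀ : log (1 - ε₀) = log lam1 - log (1 + lam1) := by
    rw [h1ε₀, log_div hlam0.ne' hs1.ne']
  have hloglam : 0 ≤ log lam1 := log_nonneg hlam
  have hlog1s : 0 ≤ log (1 + lam1) := log_nonneg (by linarith)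
  have hlogdiv : log (1 + 1 / lam1) = log (1 + lam1) - log lam1 := by
    rw [show (1:ℝ) + 1 / lam1 = (1 + lam1) / lam1 by field_simp; ring,
      log_div hs1.ne' hlam0.ne']
  have hexpneg : exp (-log lam1) = 1 / lam1 := by rw [exp_neg, exp_log hlam0, one_div]
  -- Gibbs bound at a = -log lam1
  have gibA : ∀ ε : ℝ, 0 < ε → ε < 1 →
      (-log lam1) * ε - ε * log ε - (1 - ε) * log (1 - ε) ≤ log (1 + lam1) - log lam1 := by
    intro ε h0 h1
    have := gibbs_le (-log lam1) ε h0 h1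
    rwa [hexpneg, hlogdiv] at this
  -- the set
  rcases le_or_gt θ (-2 * log lam1) with hc | hc
  · rw [if_pos hc]
    set M := 2 * log (1 + exp (θ / 2)) with hM
    -- witness
    set x₁ : ℝ := exp (θ / 2) / (1 + exp (θ / 2)) with hx₁
    have hex : 0 < exp (θ / 2) := exp_pos _
    have hes : 0 < 1 + exp (θ / 2) := by linarith
    have hx₁pos : 0 < x₁ := by positivity
    have hx₁le : x₁ ≤ ε₀ := by
      rw [hx₁, hε₀def, div_le_div_iff₀ hes hs1]
      have h2 : exp (θ / 2) ≤ exp (-log lam1) := exp_le_exp.mpr (by linarith)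
      rw [hexpneg] at h2
      have h3 : exp (θ / 2) * lam1 ≤ 1 := by
        have := (le_div_iff₀ hlam0).mp h2; linarith
      nlinarith [h3]
    have hmem : M ∈ G1 '' Set.Ioc 0 ε₀ ∪ G2 '' Set.Ioc ε₀ 1 := by
      left
      refine ⟨x₁, ⟨hx₁pos, hx₁le⟩, ?_⟩
      have he := gibbs_eq (θ / 2)
      rw [hG1]
      rw [hx₁]
      linarith [he]
    have hub : ∀ y ∈ G1 '' Set.Ioc 0 ε₀ ∪ G2 '' Set.Ioc ε₀ 1, y ≤ M := by
      rintro y (⟨ε, ⟨he1, he2⟩, rfl⟩ | ⟨ε, ⟨he1, he2⟩, rfl⟩)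
      · have hεlt1 : ε < 1 := lt_of_le_of_lt he2 hε₀lt1
        have := gibbs_le (θ / 2) ε he1 hεlt1
        rw [hG1]; linarith
      · -- G2 branch, case 1
        have key2 := gibbs_le (θ / 2) ε₀ hε₀pos hε₀lt1
        rw [hlogε₀, hlog1ε₀] at key2
        rcases lt_or_eq_of_le he2 with hεlt1 | hεeq1
        · have h1ε : 0 < 1 - ε := by linarith
          have hlm : log (lam1 * (1 - ε)) = log lam1 + log (1 - ε) :=
            log_mul hlam0.ne' h1ε.ne'
          have key1 := gibA ε (lt_trans hε₀pos he1) hεlt1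
          have hmono : ε * (θ + 2 * log lam1) ≤ ε₀ * (θ + 2 * log lam1) :=
            mul_le_mul_of_nonpos_right he1.le (by linarith)
          rw [hG2, hlm]
          nlinarith [key1, key2, hmono]
        · subst hεeq1
          rw [hG2]
          simp only [sub_self, mul_zero, zero_mul, log_one, one_mul]
          have hmono : (1 - ε₀) * (θ + 2 * log lam1) ≤ 0 :=
            mul_nonpos_of_nonneg_of_nonpos (by linarith) (by linarith)
          nlinarith [key2, hmono]
    exact le_antisymm (csSup_le ⟨M, hmem⟩ hub) (le_csSup ⟨M, hub⟩ hmem)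
  · rw [if_neg (not_le.mpr hc)]
    set M := log (1 + lam1 * exp θ) + log (1 + 1 / lam1) with hM
    have hex : 0 < lam1 * exp θ := by positivity
    have hes : 0 < 1 + lam1 * exp θ := by linarith
    have hea : exp (θ + log lam1) = lam1 * exp θ := by
      rw [exp_add, exp_log hlam0]; ring
    -- Gibbs bound at a = θ + log lam1
    have gibB : ∀ ε : ℝ, 0 < ε → ε < 1 →
        (θ + log lam1) * ε - ε * log ε - (1 - ε) * log (1 - ε) ≤ log (1 + lam1 * exp θ) := by
      intro ε h0 h1
      have := gibbs_le (θ + log lam1) ε h0 h1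
      rwa [hea] at this
    set x₂ : ℝ := lam1 * exp θ / (1 + lam1 * exp θ) with hx₂
    have hx₂pos : 0 < x₂ := by positivity
    have hx₂lt1 : x₂ < 1 := by rw [hx₂, div_lt_one hes]; linarith
    have hx₂gt : ε₀ < x₂ := by
      rw [hx₂, hε₀def, div_lt_div_iff₀ hs1 hes]
      have h2 : exp (-2 * log lam1) < exp θ := exp_lt_exp.mpr hc
      have h3 : exp (-2 * log lam1) = 1 / (lam1 * lam1) := by
        rw [show (-2 : ℝ) * log lam1 = -log lam1 + -log lam1 by ring, exp_add, hexpneg]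
        field_simp
      rw [h3] at h2
      have h4 : 1 < lam1 * lam1 * exp θ := by
        rw [div_lt_iff₀ (by positivity)] at h2; linarith [h2]
      nlinarith
    have hmem : M ∈ G1 '' Set.Ioc 0 ε₀ ∪ G2 '' Set.Ioc ε₀ 1 := by
      right
      refine ⟨x₂, ⟨hx₂gt, hx₂lt1.le⟩, ?_⟩
      have he := gibbs_eq (θ + log lam1)
      rw [hea] at he
      have h1x : 0 < 1 - x₂ := by linarith
      have hlm : log (lam1 * (1 - x₂)) = log lam1 + log (1 - x₂) :=
        log_mul hlam0.ne' h1x.ne'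
      rw [hG2, hlm, hM, hlogdiv]
      rw [hx₂]
      linarith [he]
    have hub : ∀ y ∈ G1 '' Set.Ioc 0 ε₀ ∪ G2 '' Set.Ioc ε₀ 1, y ≤ M := by
      rintro y (⟨ε, ⟨he1, he2⟩, rfl⟩ | ⟨ε, ⟨he1, he2⟩, rfl⟩)
      · -- G1 branch, case 2
        have hεlt1 : ε < 1 := lt_of_le_of_lt he2 hε₀lt1
        have key1 := gibA ε he1 hεlt1
        have key2 := gibB ε₀ hε₀pos hε₀lt1
        rw [hlogε₀, hlog1ε₀] at key2
        have hmono : ε * (θ + 2 * log lam1) ≤ ε₀ * (θ + 2 * log lam1) :=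
          mul_le_mul_of_nonneg_right he2 (by linarith)
        rw [hG1, hM, hlogdiv]
        nlinarith [key1, key2, hmono]
      · rcases lt_or_eq_of_le he2 with hεlt1 | hεeq1
        · have h1ε : 0 < 1 - ε := by linarith
          have hlm : log (lam1 * (1 - ε)) = log lam1 + log (1 - ε) :=
            log_mul hlam0.ne' h1ε.ne'
          have key := gibB ε (lt_trans hε₀pos he1) hεlt1
          rw [hG2, hlm, hM, hlogdiv]
          linarith
        · subst hεeq1
          rw [hG2, hM, hlogdiv]
          simp only [sub_self, mul_zero, zero_mul, log_one, one_mul]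
          have h5 : log (lam1 * exp θ) ≤ log (1 + lam1 * exp θ) :=
            log_le_log hex (by linarith)
          rw [log_mul hlam0.ne' (exp_pos θ).ne', log_exp] at h5
          linarith
    exact le_antisymm (csSup_le ⟨M, hmem⟩ hub) (le_csSup ⟨M, hub⟩ hmem)
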